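/- For every k ≥ 1 there exists an interval graph G on 4k vertices such that neither G nor its complement contains K_{k+1,k+1} as a subgraph. -/

import Mathlib

/-- `G` is an interval graph: the intersection graph of a family of compact intervals. -/
def IsIntervalGraph {V : Type*} (G : SimpleGraph V) : Prop :=
  ∃ f : V → ℝ × ℝ, (∀ v, (f v).1 ≤ (f v).2) ∧
    ∀ u v, G.Adj u v ↔ u ≠ v ∧
      (Set.Icc (f u).1 (f u).2 ∩ Set.Icc (f v).1 (f v).2).Nonempty

/-- `G` contains a complete bipartite subgraph `K_{m,m}`. -/
def HasBiclique {V : Type*} (G : SimpleGraph V) (m : ℕ) : Prop :=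
  ∃ A B : Finset V, Disjoint A B ∧ A.card = m ∧ B.card = m ∧
    ∀ a ∈ A, ∀ b ∈ B, G.Adj a b

/-- The intersection graph of k copies each of [0,1],[1,2],[2,3],[3,4]. -/
def blockGraph (k : ℕ) : SimpleGraph (Fin (4 * k)) where
  Adj u v := u ≠ v ∧ (u : ℕ) / k ≤ (v : ℕ) / k + 1 ∧ (v : ℕ) / k ≤ (u : ℕ) / k + 1
  symm := by
    constructor
    intro u v ⟨h1, h2, h3⟩
    exact ⟨h1.symm, h3, h2⟩
  loopless := by constructor; intro v h; exact h.1 rfl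

lemma block_lt (k : ℕ) (hk : 0 < k) (v : Fin (4 * k)) : (v : ℕ) / k < 4 := by
  rw [Nat.div_lt_iff_lt_mul hk]
  have := v.isLt
  omega

lemma card_le_of_blocks (k : ℕ) (hk : 0 < k) (A : Finset (Fin (4 * k))) (lo w : ℕ)
    (h : ∀ v ∈ A, lo ≤ (v : ℕ) / k ∧ (v : ℕ) / k < lo + w) : A.card ≤ w * k := by
  have himg : A.card = (A.image Fin.val).card :=
    (Finset.card_image_of_injective A Fin.val_injective).symm
  rw [himg]
  have hsub : A.image Fin.val ⊆ Finset.Ico (lo * k) ((lo + w) * k) := by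
    intro x hx
    obtain ⟨v, hv, rfl⟩ := Finset.mem_image.mp hx
    obtain ⟨h1, h2⟩ := h v hv
    rw [Finset.mem_Ico]
    constructor
    · exact (Nat.le_div_iff_mul_le hk).mp h1
    · have := (Nat.div_lt_iff_lt_mul hk).mp h2
      omega
  calc (A.image Fin.val).card ≤ (Finset.Ico (lo * k) ((lo + w) * k)).card :=
        Finset.card_le_card hsub
    _ = w * k := by rw [Nat.card_Ico]; ring_nf; omega

lemma auxC (k : ℕ) (hk : 0 < k) (A B : Finset (Fin (4 * k)))
    (hA : A.card = k + 1) (hB : B.card = k + 1)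
    (h : ∀ a ∈ A, ∀ b ∈ B, (a : ℕ) / k + 2 ≤ (b : ℕ) / k ∨ (b : ℕ) / k + 2 ≤ (a : ℕ) / k)
    (a0 : Fin (4 * k)) (ha0 : a0 ∈ A) (b0 : Fin (4 * k)) (hb0 : b0 ∈ B)
    (h0 : (a0 : ℕ) / k + 2 ≤ (b0 : ℕ) / k) : False := by
  have hb0lt := block_lt k hk b0
  -- every a ∈ A has block ≤ 1
  have hAsmall : ∀ a ∈ A, (a : ℕ) / k ≤ 1 := by
    intro a ha
    have h1 := h a ha b0 hb0
    have h2 := block_lt k hk a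
    have h3 := Nat.zero_le ((a0 : ℕ) / k)
    have h4 := Nat.zero_le ((a : ℕ) / k)
    omega
  by_cases hex : ∃ a ∈ A, (a : ℕ) / k = 1
  · obtain ⟨a1, ha1, ha1b⟩ := hex
    -- then every b ∈ B has block 3
    have hB3 : ∀ b ∈ B, 3 ≤ (b : ℕ) / k ∧ (b : ℕ) / k < 3 + 1 := by
      intro b hb
      have h1 := h a1 ha1 b hb
      have h2 := block_lt k hk b
      have h3 := Nat.zero_le ((a0 : ℕ) / k)
      have h4 := Nat.zero_le ((b : ℕ) / k)
      omega
    have := card_le_of_blocks k hk B 3 1 hB3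
    omega
  · push_neg at hex
    have hA0 : ∀ a ∈ A, 0 ≤ (a : ℕ) / k ∧ (a : ℕ) / k < 0 + 1 := by
      intro a ha
      have h1 := hAsmall a ha
      have h2 := hex a ha
      have h3 := Nat.zero_le ((a : ℕ) / k)
      omega
    have := card_le_of_blocks k hk A 0 1 hA0
    omega

/-- for every `k ≥ 1` there is an interval graph on `4k` vertices
such that neither it nor its complement contains `K_{k+1,k+1}`. -/
theorem stmt_6 (k : ℕ) (hk : 1 ≤ k) :
    ∃ G : SimpleGraph (Fin (4 * k)), IsIntervalGraph G ∧
      ¬HasBiclique G (k + 1) ∧ ¬HasBiclique Gᶜ (k + 1) := by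
  have hk0 : 0 < k := hk
  refine ⟨blockGraph k, ?_, ?_, ?_⟩
  · -- interval graph
    refine ⟨fun v => (((((v : ℕ) / k : ℕ)) : ℝ), ((((v : ℕ) / k : ℕ)) : ℝ) + 1), fun v => by simp, ?_⟩
    intro u v
    show (u ≠ v ∧ _) ↔ _
    dsimp only
    rw [Set.Icc_inter_Icc, Set.nonempty_Icc, max_le_iff, le_min_iff, le_min_iff]
    constructor
    · rintro ⟨h1, h2, h3⟩
      exact ⟨h1, ⟨by linarith, by exact_mod_cast h2⟩, by exact_mod_cast h3, by linarith⟩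
    · rintro ⟨h1, ⟨_, h2⟩, h3, _⟩
      exact ⟨h1, by exact_mod_cast h2, by exact_mod_cast h3⟩
  · -- no K_{k+1,k+1} in G
    rintro ⟨A, B, hdisj, hA, hB, hadj⟩
    obtain ⟨a0, ha0⟩ := Finset.card_pos.mp (by omega : 0 < A.card)
    obtain ⟨b0, hb0⟩ := Finset.card_pos.mp (by omega : 0 < B.card)
    have cross : ∀ a ∈ A, ∀ b ∈ B,
        (a : ℕ) / k ≤ (b : ℕ) / k + 1 ∧ (b : ℕ) / k ≤ (a : ℕ) / k + 1 :=
      fun a ha b hb => (hadj a ha b hb).2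
    by_cases hAone : ∀ a ∈ A, (a : ℕ) / k = (a0 : ℕ) / k
    · have : ∀ a ∈ A, (a0 : ℕ) / k ≤ (a : ℕ) / k ∧ (a : ℕ) / k < (a0 : ℕ) / k + 1 := by
        intro a ha; have := hAone a ha; omega
      have := card_le_of_blocks k hk0 A ((a0 : ℕ) / k) 1 this
      omega
    by_cases hBone : ∀ b ∈ B, (b : ℕ) / k = (b0 : ℕ) / k
    · have : ∀ b ∈ B, (b0 : ℕ) / k ≤ (b : ℕ) / k ∧ (b : ℕ) / k < (b0 : ℕ) / k + 1 := by
        intro b hb; have := hBone b hb; omega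
      have := card_le_of_blocks k hk0 B ((b0 : ℕ) / k) 1 this
      omega
    push_neg at hAone hBone
    obtain ⟨a1, ha1, ha1ne⟩ := hAone
    obtain ⟨b1, hb1, hb1ne⟩ := hBone
    have c00 := cross a0 ha0 b0 hb0
    have c01 := cross a0 ha0 b1 hb1
    have c10 := cross a1 ha1 b0 hb0
    have c11 := cross a1 ha1 b1 hb1
    set m := min ((a0 : ℕ) / k) ((a1 : ℕ) / k) with hm
    have hAB : ∀ v ∈ A ∪ B, m ≤ (v : ℕ) / k ∧ (v : ℕ) / k < m + 2 := by
      intro v hv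
      rcases Finset.mem_union.mp hv with hv | hv
      · have d0 := cross v hv b0 hb0
        have d1 := cross v hv b1 hb1
        omega
      · have d0 := cross a0 ha0 v hv
        have d1 := cross a1 ha1 v hv
        omega
    have hcard := card_le_of_blocks k hk0 (A ∪ B) m 2 hAB
    have hu : (A ∪ B).card = A.card + B.card := Finset.card_union_of_disjoint hdisj
    omega
  · -- no K_{k+1,k+1} in Gᶜ
    rintro ⟨A, B, hdisj, hA, hB, hadj⟩
    obtain ⟨a0, ha0⟩ := Finset.card_pos.mp (by omega : 0 < A.card)
    obtain ⟨b0, hb0⟩ := Finset.card_pos.mp (by omega : 0 < B.card)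
    have cross : ∀ a ∈ A, ∀ b ∈ B,
        (a : ℕ) / k + 2 ≤ (b : ℕ) / k ∨ (b : ℕ) / k + 2 ≤ (a : ℕ) / k := by
      intro a ha b hb
      have h := hadj a ha b hb
      rw [SimpleGraph.compl_adj] at h
      obtain ⟨hne, hnadj⟩ := h
      have : ¬((a : ℕ) / k ≤ (b : ℕ) / k + 1 ∧ (b : ℕ) / k ≤ (a : ℕ) / k + 1) := by
        intro hc
        exact hnadj ⟨hne, hc⟩
      omega
    rcases cross a0 ha0 b0 hb0 with h0 | h0
    · exact auxC k hk0 A B hA hB cross a0 ha0 b0 hb0 h0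
    · exact auxC k hk0 B A hB hA
        (fun b hb a ha => (cross a ha b hb).symm) b0 hb0 a0 ha0 h0
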